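/- For all integers s ≥ 2 and t ≥ 1 with not (s = 2 and t ≤ 6), one has k(s,t) ≤ s^t. -/

import Mathlib

open Finset

/-- number of partitions of `n` -/
noncomputable def pcard (n : ℕ) : ℕ := Nat.card (Nat.Partition n)

/-- the subtype underlying `kTuples` -/
abbrev STuple (s t : ℕ) := { f : Fin s → Σ n : ℕ, Nat.Partition n // ∑ i, (f i).1 = t }

def stupleOne (t : ℕ) : STuple 1 t ≃ Nat.Partition t where
  toFun f := (show (f.1 0).1 = t by simpa [Fin.sum_univ_one] using f.2) ▸ (f.1 0).2
  invFun p := ⟨fun _ => ⟨t, p⟩, by simp⟩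
  left_inv := by
    rintro ⟨f, hf⟩
    have hf' : (f 0).1 = t := by simpa [Fin.sum_univ_one] using hf
    apply Subtype.ext
    funext i
    fin_cases i
    refine Sigma.ext hf'.symm ?_
    subst hf'; rfl
  right_inv p := rfl

def stupleSucc (s t : ℕ) :
    STuple (s+1) t ≃ Σ j : Fin (t+1), Nat.Partition j × STuple s (t - j) where
  toFun f :=
    ⟨⟨(f.1 0).1, by
        have := f.2
        rw [Fin.sum_univ_succ] at this
        omega⟩,
      (f.1 0).2,
      ⟨Fin.tail f.1, by
        have := f.2
        rw [Fin.sum_univ_succ] at this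
        simp only [Fin.tail]
        omega⟩⟩
  invFun x := ⟨Fin.cons ⟨x.1, x.2.1⟩ x.2.2.1, by
      have h2 := x.2.2.2
      rw [Fin.sum_univ_succ]
      simp only [Fin.cons_zero, Fin.cons_succ]
      rw [h2]
      have := x.1.2
      omega⟩
  left_inv := by
    rintro ⟨f, hf⟩
    apply Subtype.ext
    simp only
    rw [← Fin.cons_self_tail f]
    rfl
  right_inv := by
    rintro ⟨⟨j, hj⟩, p, ⟨g, hg⟩⟩
    rfl

lemma stuple_finite : ∀ s t, Finite (STuple s t) := by
  intro s
  induction s with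
  | zero =>
    intro t
    have : Subsingleton (Fin 0 → Σ n : ℕ, Nat.Partition n) := ⟨fun a b => funext fun i => i.elim0⟩
    exact Finite.of_subsingleton
  | succ s ih =>
    intro t
    haveI : ∀ j : Fin (t+1), Finite (Nat.Partition j × STuple s (t - j)) := by
      intro j
      haveI := ih (t - j)
      infer_instance
    exact Finite.of_equiv _ (stupleSucc s t).symm

instance (s t : ℕ) : Finite (STuple s t) := stuple_finite s t

lemma natcard_sigma {m : ℕ} (β : Fin m → Type*) [h : ∀ j, Finite (β j)] :
    Nat.card (Σ j, β j) = ∑ j, Nat.card (β j) := by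
  haveI : ∀ j, Fintype (β j) := fun j => Fintype.ofFinite _
  rw [Nat.card_eq_fintype_card, Fintype.card_sigma]
  exact Finset.sum_congr rfl fun j _ => (Nat.card_eq_fintype_card).symm

lemma kTuples_eq (s t : ℕ) :
    Nat.card (STuple s t) = Nat.card (STuple s t) := rfl

lemma kconv (s t : ℕ) :
    Nat.card (STuple (s+1) t) = ∑ j ∈ range (t+1), pcard j * Nat.card (STuple s (t - j)) := by
  rw [Nat.card_congr (stupleSucc s t), natcard_sigma]
  rw [← Fin.sum_univ_eq_sum_range (fun j => pcard j * Nat.card (STuple s (t - j))) (t+1)]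
  exact Finset.sum_congr rfl fun j _ => by rw [Nat.card_prod]; rfl

lemma kone (t : ℕ) : Nat.card (STuple 1 t) = pcard t := Nat.card_congr (stupleOne t)




/-- decrement the two smallest entries (or a single entry by 2) -/
def low2 : List ℕ → List ℕ
  | [] => []
  | [x] => [x - 2]
  | x :: y :: r => (x-1) :: (y-1) :: r

lemma low2_length (l : List ℕ) : (low2 l).length = l.length := by
  match l with
  | [] => rfl
  | [x] => rfl
  | x :: y :: r => rfl

lemma low2_sum {l : List ℕ} (hne : l ≠ []) (h2 : ∀ x ∈ l, 2 ≤ x) :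
    (low2 l).sum + 2 = l.sum := by
  match l with
  | [x] =>
    have := h2 x (by simp)
    simp [low2]; omega
  | x :: y :: r =>
    have hx := h2 x (by simp)
    have hy := h2 y (by simp)
    simp [low2]; omega

lemma low2_pos {l : List ℕ} (h2 : ∀ x ∈ l, 2 ≤ x) (hs : 3 ≤ l.sum) :
    ∀ x ∈ low2 l, x ≠ 0 := by
  match l with
  | [] => simp at hs
  | [x] =>
    have := h2 x (by simp)
    simp at hs
    simp [low2]; omega
  | x :: y :: r =>
    have hx := h2 x (by simp)
    have hy := h2 y (by simp)
    intro a ha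
    simp only [low2, List.mem_cons] at ha
    rcases ha with rfl | rfl | ha
    · omega
    · omega
    · have := h2 a (by simp [ha])
      omega

lemma low2_sorted {l : List ℕ} (hl : List.Pairwise (· ≤ ·) l) :
    List.Pairwise (· ≤ ·) (low2 l) := by
  match l with
  | [] => simpa [low2] using hl
  | [x] => simp [low2]
  | x :: y :: r =>
    simp only [low2, List.pairwise_cons] at hl ⊢
    obtain ⟨hx, hy, hr⟩ := hl
    refine ⟨?_, ?_, hr⟩
    · intro b hb
      rcases List.mem_cons.1 hb with rfl | hb
      · have := hx y (by simp); omega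
      · have := hx b (by simp [hb]); omega
    · intro b hb
      have := hy b hb; omega

lemma low2_inj {l₁ l₂ : List ℕ} (h1 : ∀ x ∈ l₁, 2 ≤ x) (h2 : ∀ x ∈ l₂, 2 ≤ x)
    (h : low2 l₁ = low2 l₂) : l₁ = l₂ := by
  rcases l₁ with _ | ⟨x, _ | ⟨y, r⟩⟩ <;> rcases l₂ with _ | ⟨x', _ | ⟨y', r'⟩⟩ <;>
      simp only [low2] at h <;> try simp at h
  · rfl
  · have a1 := h1 x (by simp)
    have a2 := h2 x' (by simp)
    simp
    omega
  · have a1 := h1 x (by simp)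
    have a2 := h1 y (by simp)
    have a3 := h2 x' (by simp)
    have a4 := h2 y' (by simp)
    obtain ⟨e1, e2, e3⟩ := h
    simp only [List.cons.injEq]
    exact ⟨by omega, by omega, e3⟩

lemma parts_two_le {n : ℕ} (p : Nat.Partition n) (h : 1 ∉ p.parts) :
    ∀ x ∈ p.parts.sort (· ≤ ·), 2 ≤ x := by
  intro x hx
  have hm : x ∈ p.parts := (Multiset.mem_sort _).1 hx
  have h1 := p.parts_pos hm
  by_contra h2
  have : x = 1 := by omega
  exact h (this ▸ hm)

lemma sort_sum {n : ℕ} (p : Nat.Partition n) : (p.parts.sort (· ≤ ·)).sum = n := by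
  rw [← Multiset.sum_coe, Multiset.sort_eq, p.parts_sum]

lemma sort_ne_nil {n : ℕ} (hn : n ≠ 0) (p : Nat.Partition n) :
    p.parts.sort (· ≤ ·) ≠ [] := by
  intro h
  apply hn
  have := sort_sum p
  rw [h] at this
  simpa using this.symm

def Phi (n : ℕ) (p : Nat.Partition (n+3)) : Nat.Partition (n+2) ⊕ Nat.Partition (n+1) :=
  if h : 1 ∈ p.parts then
    Sum.inl ⟨p.parts.erase 1, fun {i} hi => p.parts_pos (Multiset.mem_of_mem_erase hi), by
      have h2 := Multiset.sum_erase h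
      have h3 := p.parts_sum
      omega⟩
  else
    Sum.inr (Nat.Partition.ofSums (n+1) ↑(low2 (p.parts.sort (· ≤ ·))) (by
      rw [Multiset.sum_coe]
      have hs := low2_sum (sort_ne_nil (by omega) p) (parts_two_le p h)
      rw [sort_sum p] at hs
      omega))

lemma Phi_inr_parts {n : ℕ} (p : Nat.Partition (n+3)) (h : 1 ∉ p.parts) (q : Nat.Partition (n+1))
    (hq : Phi n p = Sum.inr q) : q.parts = ↑(low2 (p.parts.sort (· ≤ ·))) := by
  rw [Phi, dif_neg h] at hq
  have := congrArg Nat.Partition.parts (Sum.inr.inj hq)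
  rw [Nat.Partition.ofSums_parts] at this
  rw [← this]
  apply Multiset.filter_eq_self.2
  intro a ha
  exact low2_pos (parts_two_le p h) (by rw [sort_sum p]; omega) a (by exact_mod_cast ha)

lemma Phi_inj (n : ℕ) : Function.Injective (Phi n) := by
  intro p q h
  by_cases hp : 1 ∈ p.parts <;> by_cases hq : 1 ∈ q.parts
  · rw [Phi, dif_pos hp, Phi, dif_pos hq, Sum.inl.injEq] at h
    have h2 := congrArg Nat.Partition.parts h
    simp only at h2
    exact Nat.Partition.ext
      (by rw [← Multiset.cons_erase hp, ← Multiset.cons_erase hq, h2])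
  · rw [Phi, dif_pos hp, Phi, dif_neg hq] at h; simp at h
  · rw [Phi, dif_neg hp, Phi, dif_pos hq] at h; simp at h
  · obtain ⟨p2, hp2⟩ : ∃ x, Phi n p = Sum.inr x := by rw [Phi, dif_neg hp]; exact ⟨_, rfl⟩
    obtain ⟨q2, hq2⟩ : ∃ x, Phi n q = Sum.inr x := by rw [Phi, dif_neg hq]; exact ⟨_, rfl⟩
    have e : p2 = q2 := Sum.inr.inj (by rw [← hp2, ← hq2, h])
    have a1 := Phi_inr_parts p hp p2 hp2
    have a2 := Phi_inr_parts q hq q2 hq2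
    rw [e, a2] at a1
    haveI : IsAntisymm ℕ (· ≤ ·) := ⟨fun a b h1 h2 => le_antisymm h1 h2⟩
    have hperm : low2 (p.parts.sort (· ≤ ·)) = low2 (q.parts.sort (· ≤ ·)) := by
      apply List.Perm.eq_of_pairwise' (r := (· ≤ ·)) ?_ ?_ (Multiset.coe_eq_coe.1 a1.symm)
      · exact low2_sorted (Multiset.pairwise_sort _ _)
      · exact low2_sorted (Multiset.pairwise_sort _ _)
    have := low2_inj (parts_two_le p hp) (parts_two_le q hq) hperm
    apply Nat.Partition.ext
    rw [← Multiset.sort_eq p.parts (· ≤ ·), ← Multiset.sort_eq q.parts (· ≤ ·), this]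

def ones (m : ℕ) : Nat.Partition m where
  parts := Multiset.replicate m 1
  parts_pos := fun {i} hi => by rw [Multiset.eq_of_mem_replicate hi]; norm_num
  parts_sum := by simp

lemma Phi_ne_ones (n : ℕ) (hn : 2 ≤ n) (p : Nat.Partition (n+3)) :
    Phi n p ≠ Sum.inr (ones (n+1)) := by
  intro h
  by_cases hp : 1 ∈ p.parts
  · rw [Phi, dif_pos hp] at h; simp at h
  · obtain ⟨l, h2le, a1⟩ : ∃ l : List ℕ, (∀ x ∈ l, 2 ≤ x) ∧
        (ones (n+1)).parts = ↑(low2 l) :=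
      ⟨_, parts_two_le p hp, Phi_inr_parts p hp _ h⟩
    have hlen : l.length = n + 1 := by
      have hc := congrArg Multiset.card a1
      simp only [ones, Multiset.card_replicate, Multiset.coe_card] at hc
      rw [low2_length] at hc
      omega
    rcases l with _ | ⟨x, _ | ⟨y, r⟩⟩
    · simp at hlen
    · simp at hlen; omega
    · have hr : r ≠ [] := by
        intro h0
        rw [h0] at hlen
        simp at hlen
        omega
      obtain ⟨e, he⟩ := List.exists_mem_of_ne_nil r hr
      have he2 : 2 ≤ e := h2le e (by simp [he])
      have hmem : e ∈ (ones (n+1)).parts := by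
        rw [a1]
        show e ∈ ((low2 (x :: y :: r) : List ℕ) : Multiset ℕ)
        simp only [low2]
        simp [he]
      have := Multiset.eq_of_mem_replicate (show e ∈ Multiset.replicate (n+1) 1 from hmem)
      omega

lemma pcard_zero : pcard 0 = 1 := Nat.card_unique
lemma pcard_one : pcard 1 = 1 := Nat.card_unique

lemma pcard_rec (n : ℕ) : pcard (n+3) ≤ pcard (n+2) + pcard (n+1) := by
  have := Nat.card_le_card_of_injective (Phi n) (Phi_inj n)
  rwa [Nat.card_sum] at this

lemma pcard_rec' (n : ℕ) (hn : 2 ≤ n) : pcard (n+3) + 1 ≤ pcard (n+2) + pcard (n+1) := by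
  classical
  let F : Nat.Partition (n+3) ⊕  Unit → Nat.Partition (n+2) ⊕ Nat.Partition (n+1) :=
    fun x => match x with
      | Sum.inl p => Phi n p
      | Sum.inr _ => Sum.inr (ones (n+1))
  have hinj : Function.Injective F := by
    intro a b hab
    match a, b with
    | Sum.inl p, Sum.inl q =>
      exact congrArg Sum.inl (Phi_inj n hab)
    | Sum.inl p, Sum.inr u => exact absurd hab (Phi_ne_ones n hn p)
    | Sum.inr u, Sum.inl q => exact absurd hab.symm (Phi_ne_ones n hn q)
    | Sum.inr u, Sum.inr v => rfl
  have hle := Nat.card_le_card_of_injective F hinj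
  rw [Nat.card_sum, Nat.card_sum, Nat.card_unique (α := Unit)] at hle
  exact hle

lemma pcard_two : pcard 2 ≤ 2 := by
  classical
  have hinj : Function.Injective (fun p : Nat.Partition 2 => decide (1 ∈ p.parts)) := by
    intro p q h
    simp only [decide_eq_decide] at h
    apply Nat.Partition.ext
    by_cases hp : 1 ∈ p.parts
    · have hq : 1 ∈ q.parts := h.1 hp
      have e1 : p.parts.erase 1 = {1} := by
        have u1 : (⟨p.parts.erase 1, fun {i} hi => p.parts_pos (Multiset.mem_of_mem_erase hi),
            by have := Multiset.sum_erase hp; have := p.parts_sum; omega⟩ : Nat.Partition 1)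
            = default := Unique.eq_default _
        have := congrArg Nat.Partition.parts u1
        simpa [Nat.Partition.indiscrete_parts] using this
      have e2 : q.parts.erase 1 = {1} := by
        have u1 : (⟨q.parts.erase 1, fun {i} hi => q.parts_pos (Multiset.mem_of_mem_erase hi),
            by have := Multiset.sum_erase hq; have := q.parts_sum; omega⟩ : Nat.Partition 1)
            = default := Unique.eq_default _
        have := congrArg Nat.Partition.parts u1
        simpa [Nat.Partition.indiscrete_parts] using this
      rw [← Multiset.cons_erase hp, ← Multiset.cons_erase hq, e1, e2]
    · have hq : 1 ∉ q.parts := fun hx => hp (h.2 hx)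
      have key : ∀ r : Nat.Partition 2, 1 ∉ r.parts → r.parts = {2} := by
        intro r hr
        have hne : r.parts ≠ 0 := by
          intro h0
          have := r.parts_sum
          rw [h0] at this
          simp at this
        obtain ⟨a, ha⟩ := Multiset.exists_mem_of_ne_zero hne
        have ha2 : 2 ≤ a := by
          have := r.parts_pos ha
          by_contra h2
          have : a = 1 := by omega
          exact hr (this ▸ ha)
        have hsum := Multiset.sum_erase ha
        rw [r.parts_sum] at hsum
        have ha2' : a = 2 := by
          have hnn : 0 ≤ (r.parts.erase a).sum := Nat.zero_le _
          omega
        have hz : (r.parts.erase a).sum = 0 := by omega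
        have herase : r.parts.erase a = 0 := by
          by_contra h0
          obtain ⟨b, hb⟩ := Multiset.exists_mem_of_ne_zero h0
          have := r.parts_pos (Multiset.mem_of_mem_erase hb)
          have := Multiset.single_le_sum (fun x _ => Nat.zero_le x) b hb
          omega
        rw [← Multiset.cons_erase ha, herase, ha2']
        rfl
      rw [key p hp, key q hq]
  have := Nat.card_le_card_of_injective _ hinj
  simpa [pcard, Nat.card_eq_fintype_card] using this



/-- bound for number of partitions: `Pb 0 = 1`, `Pb (j+1) = 2^j` -/
def Pb : ℕ → ℕ
  | 0 => 1
  | (j+1) => 2^j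

def convP (A : ℕ → ℕ) (t : ℕ) : ℕ := ∑ j ∈ range (t+1), Pb j * A (t - j)

lemma convP_zero (A : ℕ → ℕ) : convP A 0 = A 0 := by simp [convP, Pb]

lemma convP_succ (A : ℕ → ℕ) (t : ℕ) :
    convP A (t+1) + A t = 2 * convP A t + A (t+1) := by
  have e1 : convP A (t+1)
      = (∑ j ∈ range (t+1), 2^j * A (t - j)) + A (t+1) := by
    rw [convP, Finset.sum_range_succ']
    simp only [Pb, Nat.succ_sub_succ, Nat.sub_zero, one_mul]
  have e2 : convP A t = (∑ j ∈ range t, 2^j * A (t - 1 - j)) + A t := by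
    rw [convP, Finset.sum_range_succ']
    simp only [Pb, Nat.succ_sub_succ, Nat.sub_zero, one_mul]
    congr 1
    refine Finset.sum_congr rfl fun j hj => ?_
    have h : t - (j+1) = t - 1 - j := by omega
    rw [h]
  have e3 : (∑ j ∈ range (t+1), 2^j * A (t - j))
      = 2 * (∑ j ∈ range t, 2^j * A (t - 1 - j)) + A t := by
    rw [Finset.sum_range_succ']
    simp only [pow_zero, Nat.sub_zero, one_mul]
    congr 1
    rw [Finset.mul_sum]
    refine Finset.sum_congr rfl fun j hj => ?_
    have h : t - (j+1) = t - 1 - j := by omega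
    rw [h, pow_succ]
    ring
  rw [e1, e2, e3]
  ring

/-- bound for kTuples 2 -/
def Db (t : ℕ) : ℕ := convP Pb t

/-- bound for kTuples 3 -/
def Cb (t : ℕ) : ℕ := convP Db t

lemma Db_zero : Db 0 = 1 := by decide
lemma Db_one : Db 1 = 2 := by decide
lemma Cb_zero : Cb 0 = 1 := by decide
lemma Cb_one : Cb 1 = 3 := by decide

lemma fourD : ∀ u : ℕ, 4 * Db (u+1) = 2^(u+1) * (u+4) := by
  intro u
  induction u with
  | zero => rw [Db_one]; norm_num
  | succ u ih =>
    show 4 * Db (u+2) = 2^(u+2) * (u+5)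
    have key : Db (u+2) + 2^u = 2 * Db (u+1) + 2^(u+1) := convP_succ Pb (u+1)
    have e : 4 * Db (u+2) + 4 * 2^u = 2 * (2^(u+1) * (u+4)) + 4 * 2^(u+1) := by omega
    have p1 : (2:ℕ)^(u+1) = 2 * 2^u := by rw [pow_succ]; ring
    have p2 : (2:ℕ)^(u+2) = 4 * 2^u := by rw [pow_succ, pow_succ]; ring
    have e2 : 2 * ((2 * 2^u) * (u+4)) + 4 * (2 * 2^u) = (4 * 2^u) * (u+5) + 4 * 2^u := by
      ring
    rw [p1] at e
    rw [p2]
    omega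

lemma sixteenC : ∀ u : ℕ, 16 * Cb (u+1) = 2^(u+1) * ((u+3) * (u+8)) := by
  intro u
  induction u with
  | zero => rw [Cb_one]; norm_num
  | succ u ih =>
    show 16 * Cb (u+2) = 2^(u+2) * ((u+4) * (u+9))
    have key : Cb (u+2) + Db (u+1) = 2 * Cb (u+1) + Db (u+2) := convP_succ Db (u+1)
    have d1 := fourD u
    have d2 : 4 * Db (u+2) = 2^(u+2) * (u+5) := fourD (u+1)
    have e : 16 * Cb (u+2) + 4 * (2^(u+1) * (u+4)) =
        2 * (2^(u+1) * ((u+3) * (u+8))) + 4 * (2^(u+2) * (u+5)) := by omega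
    have p1 : (2:ℕ)^(u+1) = 2 * 2^u := by rw [pow_succ]; ring
    have p2 : (2:ℕ)^(u+2) = 4 * 2^u := by rw [pow_succ, pow_succ]; ring
    have e2 : 2 * ((2 * 2^u) * ((u+3) * (u+8))) + 4 * ((4 * 2^u) * (u+5))
        = (4 * 2^u) * ((u+4) * (u+9)) + 4 * ((2 * 2^u) * (u+4)) := by ring
    rw [p1, p2] at e
    rw [p2]
    omega

lemma Cb_le_three_pow (t : ℕ) : Cb t ≤ 3^t := by
  rcases t with _ | u
  · rw [Cb_zero]; norm_num
  · have h16 := sixteenC u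
    have key : ∀ v : ℕ, 2^(v+1) * ((v+3) * (v+8)) ≤ 16 * 3^(v+1) := by
      intro v
      induction v with
      | zero => norm_num
      | succ v ih =>
        have h1 : 2 * ((v+4) * (v+9)) ≤ 3 * ((v+3) * (v+8)) := by nlinarith
        calc 2^(v+2) * ((v+1+3) * (v+1+8)) = 2 * (2^(v+1) * ((v+4) * (v+9))) := by
              rw [pow_succ]; ring
          _ = 2^(v+1) * (2 * ((v+4) * (v+9))) := by ring
          _ ≤ 2^(v+1) * (3 * ((v+3) * (v+8))) := Nat.mul_le_mul_left _ h1
          _ = 3 * (2^(v+1) * ((v+3) * (v+8))) := by ring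
          _ ≤ 3 * (16 * 3^(v+1)) := Nat.mul_le_mul_left _ ih
          _ = 16 * 3^(v+2) := by rw [pow_succ]; ring
    have := key u
    omega

/-- the geometric bound: `∑ j ≤ t, Pb j * s^(t-j) ≤ (s+1)^t` for `s ≥ 1` -/
lemma geo (s : ℕ) (hs : 1 ≤ s) : ∀ t : ℕ, ∑ j ∈ range (t+1), Pb j * s^(t-j) ≤ (s+1)^t := by
  intro t
  induction t with
  | zero => simp [Pb]
  | succ t ih =>
    rw [Finset.sum_range_succ]
    have e : ∑ j ∈ range (t+1), Pb j * s^(t+1-j) = s * ∑ j ∈ range (t+1), Pb j * s^(t-j) := by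
      rw [Finset.mul_sum]
      refine Finset.sum_congr rfl fun j hj => ?_
      have hjt : j ≤ t := by have := Finset.mem_range.1 hj; omega
      have h : t + 1 - j = (t - j) + 1 := by omega
      rw [h, pow_succ]
      ring
    rw [e]
    have h1 : s * ∑ j ∈ range (t+1), Pb j * s^(t-j) ≤ s * (s+1)^t :=
      Nat.mul_le_mul_left _ ih
    have h2 : Pb (t+1) * s^(t+1-(t+1)) = 2^t := by
      simp [Pb]
    rw [h2]
    have h3 : (2:ℕ)^t ≤ (s+1)^t := Nat.pow_le_pow_left (by omega) t
    calc s * ∑ j ∈ range (t+1), Pb j * s^(t-j) + 2^t ≤ s * (s+1)^t + (s+1)^t :=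
          Nat.add_le_add h1 h3
      _ = (s+1)^(t+1) := by rw [pow_succ]; ring



lemma fib_add2_le : ∀ j : ℕ, Nat.fib (j+2) ≤ 2^j := by
  have key : ∀ j : ℕ, Nat.fib (j+2) ≤ 2^j ∧ Nat.fib (j+3) ≤ 2^(j+1) := by
    intro j
    induction j with
    | zero => constructor <;> decide
    | succ j ih =>
      refine ⟨ih.2, ?_⟩
      have := Nat.fib_add_two (n := j+2)
      calc Nat.fib (j+4) = Nat.fib (j+2) + Nat.fib (j+3) := this
        _ ≤ 2^j + 2^(j+1) := Nat.add_le_add ih.1 ih.2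
        _ ≤ 2^(j+2) := by
            have : (2:ℕ)^(j+2) = 2^j + (2^j + 2*2^j) := by ring
            rw [this]
            have : (2:ℕ)^(j+1) = 2*2^j := by ring
            omega
  exact fun j => (key j).1

lemma fib_le_pow3 : ∀ n : ℕ, 3 ≤ n → Nat.fib (n+3) ≤ 2^n := by
  have key : ∀ k : ℕ, Nat.fib (k+6) ≤ 2^(k+3) ∧ Nat.fib (k+7) ≤ 2^(k+4) := by
    intro k
    induction k with
    | zero => constructor <;> decide
    | succ k ih =>
      refine ⟨ih.2, ?_⟩
      have h := Nat.fib_add_two (n := k+6)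
      calc Nat.fib (k+8) = Nat.fib (k+6) + Nat.fib (k+7) := h
        _ ≤ 2^(k+3) + 2^(k+4) := Nat.add_le_add ih.1 ih.2
        _ ≤ 2^(k+5) := by
            have e1 : (2:ℕ)^(k+4) = 2*2^(k+3) := by ring
            have e2 : (2:ℕ)^(k+5) = 4*2^(k+3) := by ring
            omega
  intro n hn
  obtain ⟨k, rfl⟩ : ∃ k, n = k + 3 := ⟨n - 3, by omega⟩
  exact (key k).1

def Lb (t : ℕ) : ℕ := ∑ j ∈ range (t+1), Nat.fib (j+1) * Nat.fib (t+1-j)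

lemma Lb_rec (t : ℕ) : Lb (t+2) = Lb (t+1) + Lb t + Nat.fib (t+3) := by
  have e1 : Lb (t+2) = (∑ j ∈ range (t+1), Nat.fib (j+1) * Nat.fib (t+3-j))
      + Nat.fib (t+2) + Nat.fib (t+3) := by
    show (∑ j ∈ range (t+3), Nat.fib (j+1) * Nat.fib (t+3-j)) = _
    rw [Finset.sum_range_succ, Finset.sum_range_succ]
    have i1 : t+3-(t+2) = 1 := by omega
    have i2 : t+3-(t+1) = 2 := by omega
    rw [i1, i2]
    simp [Nat.fib_one, Nat.fib_two]
  have e2 : Lb (t+1) = (∑ j ∈ range (t+1), Nat.fib (j+1) * Nat.fib (t+2-j))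
      + Nat.fib (t+2) := by
    show (∑ j ∈ range (t+2), Nat.fib (j+1) * Nat.fib (t+2-j)) = _
    rw [Finset.sum_range_succ]
    have i1 : t+2-(t+1) = 1 := by omega
    rw [i1]
    simp [Nat.fib_one]
  have e3 : (∑ j ∈ range (t+1), Nat.fib (j+1) * Nat.fib (t+3-j))
      = (∑ j ∈ range (t+1), Nat.fib (j+1) * Nat.fib (t+1-j))
        + (∑ j ∈ range (t+1), Nat.fib (j+1) * Nat.fib (t+2-j)) := by
    rw [← Finset.sum_add_distrib]
    refine Finset.sum_congr rfl fun j hj => ?_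
    have hjt : j ≤ t := by have := Finset.mem_range.1 hj; omega
    have i1 : t+3-j = (t+1-j)+2 := by omega
    have i2 : t+2-j = (t+1-j)+1 := by omega
    rw [i1, i2, Nat.fib_add_two, Nat.mul_add]
  have e4 : Lb t = ∑ j ∈ range (t+1), Nat.fib (j+1) * Nat.fib (t+1-j) := rfl
  omega

lemma Lb_le : ∀ n : ℕ, Lb (n+8) ≤ 2^(n+8) := by
  have key : ∀ n : ℕ, Lb (n+8) ≤ 2^(n+8) ∧ Lb (n+9) ≤ 2^(n+9) := by
    intro n
    induction n with
    | zero => constructor <;> decide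
    | succ n ih =>
      refine ⟨ih.2, ?_⟩
      show Lb (n+10) ≤ 2^(n+10)
      have hr : Lb (n+10) = Lb (n+9) + Lb (n+8) + Nat.fib (n+11) := Lb_rec (n+8)
      have hf : Nat.fib (n+11) ≤ 2^(n+8) := fib_le_pow3 (n+8) (by omega)
      have e1 : (2:ℕ)^(n+9) = 2*2^(n+8) := by ring
      have e2 : (2:ℕ)^(n+10) = 4*2^(n+8) := by ring
      omega
  exact fun n => (key n).1



/-- `kTuples s t` is the number of `s`-tuples `(λ₁, …, λ_s)` of integer partitions
(of arbitrary nonnegative integers) with `|λ₁| + ⋯ + |λ_s| = t`. -/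
noncomputable def kTuples (s t : ℕ) : ℕ :=
  Nat.card { f : Fin s → Σ n : ℕ, Nat.Partition n // ∑ i, (f i).1 = t }



lemma pcard_le_fib : ∀ n : ℕ, pcard n ≤ Nat.fib (n+1) := by
  intro n
  induction n using Nat.strong_induction_on with
  | _ n ih =>
    match n with
    | 0 => rw [pcard_zero]; decide
    | 1 => rw [pcard_one]; decide
    | 2 => exact le_trans pcard_two (by decide)
    | (m+3) =>
      calc pcard (m+3) ≤ pcard (m+2) + pcard (m+1) := pcard_rec m
        _ ≤ Nat.fib (m+3) + Nat.fib (m+2) :=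
            Nat.add_le_add (ih (m+2) (by omega)) (ih (m+1) (by omega))
        _ = Nat.fib (m+4) := by
            have h : Nat.fib (m+4) = Nat.fib (m+2) + Nat.fib (m+3) := Nat.fib_add_two
            omega

lemma pcard_le_Pb : ∀ j : ℕ, pcard j ≤ Pb j := by
  intro j
  match j with
  | 0 => rw [pcard_zero]; decide
  | (j+1) => exact le_trans (pcard_le_fib (j+1)) (fib_add2_le j)

lemma kTuples_eq_card (s t : ℕ) : kTuples s t = Nat.card (STuple s t) := rfl

lemma kTuples_conv (s t : ℕ) :
    kTuples (s+1) t = ∑ j ∈ Finset.range (t+1), pcard j * kTuples s (t - j) := kconv s t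

lemma kTuples_one (t : ℕ) : kTuples 1 t = pcard t := kone t

lemma kTuples_two_conv (t : ℕ) :
    kTuples 2 t = ∑ j ∈ Finset.range (t+1), pcard j * pcard (t - j) := by
  rw [kTuples_conv 1 t]
  exact Finset.sum_congr rfl fun j _ => by rw [kTuples_one]

lemma kTuples_two_le_Db (u : ℕ) : kTuples 2 u ≤ Db u := by
  rw [kTuples_two_conv]
  exact Finset.sum_le_sum fun j _ => Nat.mul_le_mul (pcard_le_Pb j) (pcard_le_Pb (u-j))

lemma kTuples_three_le_Cb (t : ℕ) : kTuples 3 t ≤ Cb t := by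
  rw [kTuples_conv 2 t]
  exact Finset.sum_le_sum fun j _ =>
    Nat.mul_le_mul (pcard_le_Pb j) (kTuples_two_le_Db (t-j))

lemma main_three_up : ∀ s : ℕ, 3 ≤ s → ∀ t : ℕ, kTuples s t ≤ s^t := by
  intro s hs
  induction s, hs using Nat.le_induction with
  | base => exact fun t => le_trans (kTuples_three_le_Cb t) (Cb_le_three_pow t)
  | succ s hs ih =>
    intro t
    rw [kTuples_conv s t]
    calc ∑ j ∈ Finset.range (t+1), pcard j * kTuples s (t - j)
        ≤ ∑ j ∈ Finset.range (t+1), Pb j * s^(t-j) :=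
          Finset.sum_le_sum fun j _ => Nat.mul_le_mul (pcard_le_Pb j) (ih (t-j))
      _ ≤ (s+1)^t := geo s (by omega) t

lemma kTuples_two_le_Lb (t : ℕ) : kTuples 2 t ≤ Lb t := by
  rw [kTuples_two_conv]
  refine Finset.sum_le_sum fun j hj => ?_
  have hjt : j ≤ t := by have := Finset.mem_range.1 hj; omega
  have i1 : t + 1 - j = (t - j) + 1 := by omega
  rw [i1]
  exact Nat.mul_le_mul (pcard_le_fib j) (pcard_le_fib (t-j))

lemma pcard5 : pcard 5 ≤ 7 := by
  have h : pcard 5 + 1 ≤ pcard 4 + pcard 3 := pcard_rec' 2 (le_refl 2)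
  have h4 : pcard 4 ≤ 5 := le_trans (pcard_le_fib 4) (by decide)
  have h3 : pcard 3 ≤ 3 := le_trans (pcard_le_fib 3) (by decide)
  omega

lemma pcard6 : pcard 6 ≤ 11 := by
  have h : pcard 6 + 1 ≤ pcard 5 + pcard 4 := pcard_rec' 3 (by omega)
  have h5 := pcard5
  have h4 : pcard 4 ≤ 5 := le_trans (pcard_le_fib 4) (by decide)
  omega

lemma pcard7 : pcard 7 ≤ 17 := by
  have h : pcard 7 + 1 ≤ pcard 6 + pcard 5 := pcard_rec' 4 (by omega)
  have := pcard5
  have := pcard6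
  omega

lemma kTuples_two_seven : kTuples 2 7 ≤ 128 := by
  rw [kTuples_two_conv]
  have h0 := pcard_zero
  have h1 := pcard_one
  have h2 := pcard_two
  have h3 : pcard 3 ≤ 3 := le_trans (pcard_le_fib 3) (by decide)
  have h4 : pcard 4 ≤ 5 := le_trans (pcard_le_fib 4) (by decide)
  have h5 := pcard5
  have h6 := pcard6
  have h7 := pcard7
  have m0 : pcard 0 * pcard 7 ≤ 17 := by
    calc pcard 0 * pcard 7 ≤ 1 * 17 := Nat.mul_le_mul (le_of_eq h0) h7
      _ = 17 := by norm_num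
  have m1 : pcard 1 * pcard 6 ≤ 11 := by
    calc pcard 1 * pcard 6 ≤ 1 * 11 := Nat.mul_le_mul (le_of_eq h1) h6
      _ = 11 := by norm_num
  have m2 : pcard 2 * pcard 5 ≤ 14 := by
    calc pcard 2 * pcard 5 ≤ 2 * 7 := Nat.mul_le_mul h2 h5
      _ = 14 := by norm_num
  have m3 : pcard 3 * pcard 4 ≤ 15 := by
    calc pcard 3 * pcard 4 ≤ 3 * 5 := Nat.mul_le_mul h3 h4
      _ = 15 := by norm_num
  have m4 : pcard 4 * pcard 3 ≤ 15 := by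
    calc pcard 4 * pcard 3 ≤ 5 * 3 := Nat.mul_le_mul h4 h3
      _ = 15 := by norm_num
  have m5 : pcard 5 * pcard 2 ≤ 14 := by
    calc pcard 5 * pcard 2 ≤ 7 * 2 := Nat.mul_le_mul h5 h2
      _ = 14 := by norm_num
  have m6 : pcard 6 * pcard 1 ≤ 11 := by
    calc pcard 6 * pcard 1 ≤ 11 * 1 := Nat.mul_le_mul h6 (le_of_eq h1)
      _ = 11 := by norm_num
  have m7 : pcard 7 * pcard 0 ≤ 17 := by
    calc pcard 7 * pcard 0 ≤ 17 * 1 := Nat.mul_le_mul h7 (le_of_eq h0)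
      _ = 17 := by norm_num
  norm_num [Finset.sum_range_succ]
  omega

theorem kTuples_le_pow (s t : ℕ) (hs : 2 ≤ s) (ht : 1 ≤ t)
    (h : ¬ (s = 2 ∧ t ≤ 6)) : kTuples s t ≤ s ^ t := by
  rcases Nat.lt_or_ge s 3 with h3 | h3
  · have hs2 : s = 2 := by omega
    subst hs2
    have ht7 : 7 ≤ t := by
      by_contra hcon
      exact h ⟨rfl, by omega⟩
    rcases Nat.lt_or_ge t 8 with h8 | h8
    · have : t = 7 := by omega
      subst this
      calc kTuples 2 7 ≤ 128 := kTuples_two_seven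
        _ = 2^7 := by norm_num
    · obtain ⟨n, rfl⟩ : ∃ n, t = n + 8 := ⟨t - 8, by omega⟩
      exact le_trans (kTuples_two_le_Lb (n+8)) (Lb_le n)
  · exact main_three_up s h3 t
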